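/- (Validity of the partitioned lower bound NewLB.) Suppose the finite task set V is partitioned into nonempty groups G_1, …, G_m and σ is a schedule respecting precedence and capacity such that, for each i < m, every task of G_i finishes no later than any task of G_{i+1} starts (i.e., max_{u∈G_i}(σ(u)+dur(u)) ≤ min_{v∈G_{i+1}} σ(v)). Then the makespan of σ is at least Σ_{i=1}^{m} max( CPLen(G_i), TWork(G_i) ). -/

import Mathlib

/-- Critical-path length of the set `S`: the supremum of the sums of durations
over `r`-paths all of whose tasks lie in `S` (`0` if `S` is empty). -/
noncomputable def CPLen {V : Type*} (r : V → V → Prop) (dur : V → ℝ) (S : Set V) : ℝ :=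
  sSup {x | ∃ l : List V, l.Chain' r ∧ (∀ v ∈ l, v ∈ S) ∧ x = (l.map dur).sum}

/-- Total work of the tasks in `S`, normalized by the capacity `C`. -/
noncomputable def TWork {V : Type*} (dur dem : V → ℝ) (C : ℝ) (S : Finset V) : ℝ :=
  (∑ v ∈ S, dur v * dem v) / C

open MeasureTheory

private lemma chain_bound {V : Type*} (r : V → V → Prop) (dur σ : V → ℝ) (b : ℝ)
    (hprec : ∀ u v, r u v → σ u + dur u ≤ σ v) :
    ∀ l : List V, l.Chain' r → (∀ v ∈ l, σ v + dur v ≤ b) →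
      ∀ v, l.head? = some v → (l.map dur).sum ≤ b - σ v := by
  intro l
  induction l with
  | nil => intro _ _ v hv; simp at hv
  | cons x rest ih =>
    intro hch hmem v hv
    simp only [List.head?_cons, Option.some.injEq] at hv
    subst hv
    cases rest with
    | nil =>
      simp only [List.map_cons, List.map_nil, List.sum_cons, List.sum_nil, add_zero]
      have := hmem x (by simp)
      linarith
    | cons u t =>
      have hch' : (u :: t).Chain' r := hch.tail
      have hru : r x u := (List.isChain_cons_cons.mp hch).1
      have ihsum := ih hch' (fun w hw => hmem w (List.mem_cons_of_mem _ hw)) u rfl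
      have h1 : σ x + dur x ≤ σ u := hprec x u hru
      simp only [List.map_cons, List.sum_cons] at ihsum ⊢
      linarith

private lemma area_bound {V : Type*} (dur dem : V → ℝ) (C : ℝ) (σ : V → ℝ)
    (hdur : ∀ v, 0 ≤ dur v) (hdem : ∀ v, 0 ≤ dem v) (hC : 0 < C)
    (a b : ℝ) (hab : a ≤ b) (G : Finset V)
    (hmem : ∀ v ∈ G, a ≤ σ v ∧ σ v + dur v ≤ b)
    (hcap : ∀ t : ℝ, ∑ v ∈ G.filter (fun v => σ v ≤ t ∧ t < σ v + dur v), dem v ≤ C) :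
    ∑ v ∈ G, dur v * dem v ≤ C * (b - a) := by
  classical
  have hint : ∀ v ∈ G, Integrable ((Set.Ico (σ v) (σ v + dur v)).indicator (fun _ => dem v)) := by
    intro v _
    rw [integrable_indicator_iff measurableSet_Ico]
    exact (integrableOn_const_iff).2 (Or.inr (by rw [Real.volume_Ico]; exact ENNReal.ofReal_lt_top))
  have key : ∀ v ∈ G, dur v * dem v =
      ∫ t, (Set.Ico (σ v) (σ v + dur v)).indicator (fun _ => dem v) t := by
    intro v hv
    rw [integral_indicator_const _ measurableSet_Ico, measureReal_def, Real.volume_Ico, smul_eq_mul,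
      ENNReal.toReal_ofReal (by have := hdur v; linarith)]
    ring
  rw [Finset.sum_congr rfl key, ← integral_finset_sum G hint]
  have hintC : Integrable ((Set.Ico a b).indicator (fun _ : ℝ => C)) := by
    rw [integrable_indicator_iff measurableSet_Ico]
    exact (integrableOn_const_iff).2 (Or.inr (by rw [Real.volume_Ico]; exact ENNReal.ofReal_lt_top))
  have hintS : Integrable (fun t => ∑ v ∈ G, (Set.Ico (σ v) (σ v + dur v)).indicator (fun _ => dem v) t) :=
    integrable_finset_sum G hint
  have hmono : ∀ t : ℝ, ∑ v ∈ G, (Set.Ico (σ v) (σ v + dur v)).indicator (fun _ => dem v) t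
      ≤ (Set.Ico a b).indicator (fun _ => C) t := by
    intro t
    by_cases ht : t ∈ Set.Ico a b
    · rw [Set.indicator_of_mem ht]
      have : ∀ v ∈ G, (Set.Ico (σ v) (σ v + dur v)).indicator (fun _ => dem v) t
          = if σ v ≤ t ∧ t < σ v + dur v then dem v else 0 := by
        intro v _
        by_cases h : σ v ≤ t ∧ t < σ v + dur v
        · rw [Set.indicator_of_mem (by exact ⟨h.1, h.2⟩), if_pos h]
        · rw [Set.indicator_of_notMem (by simpa [Set.mem_Ico] using h), if_neg h]
      rw [Finset.sum_congr rfl this, ← Finset.sum_filter]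
      exact hcap t
    · rw [Set.indicator_of_notMem ht]
      apply le_of_eq
      apply Finset.sum_eq_zero
      intro v hv
      apply Set.indicator_of_notMem
      intro hmem'
      apply ht
      obtain ⟨h1, h2⟩ := hmem v hv
      exact ⟨le_trans h1 hmem'.1, lt_of_lt_of_le hmem'.2 h2⟩
  calc ∫ t, ∑ v ∈ G, (Set.Ico (σ v) (σ v + dur v)).indicator (fun _ => dem v) t
      ≤ ∫ t, (Set.Ico a b).indicator (fun _ => C) t := integral_mono hintS hintC hmono
    _ = C * (b - a) := by
        rw [integral_indicator_const _ measurableSet_Ico, measureReal_def, Real.volume_Ico, smul_eq_mul,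
          ENNReal.toReal_ofReal (by linarith)]
        ring

open scoped Classical in
/-- **Validity of the partitioned lower bound `NewLB`.**
If `V` is partitioned into nonempty groups `G 0, …, G (m-1)` and `σ` is a
schedule respecting precedence and capacity such that every task of `G i`
finishes no later than any task of `G (i+1)` starts, then the makespan of `σ`
is at least `∑ i, max (CPLen (G i)) (TWork (G i))`. -/
theorem newLB_valid {V : Type*} [Fintype V] [Nonempty V]
    (r : V → V → Prop) (dur dem : V → ℝ) (C : ℝ) (σ : V → ℝ)
    (hdur : ∀ v, 0 ≤ dur v) (hdem : ∀ v, 0 ≤ dem v) (hC : 0 < C)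
    (hσ : ∀ v, 0 ≤ σ v)
    (hprec : ∀ u v, r u v → σ u + dur u ≤ σ v)
    (hcap : ∀ t : ℝ,
      ∑ v ∈ Finset.univ.filter (fun v => σ v ≤ t ∧ t < σ v + dur v), dem v ≤ C)
    (m : ℕ) (G : Fin m → Finset V)
    (hne : ∀ i, (G i).Nonempty)
    (hdisj : ∀ i j, i ≠ j → Disjoint (G i) (G j))
    (hcover : ∀ v : V, ∃ i, v ∈ G i)
    (horder : ∀ (i : ℕ) (h1 : i < m) (h2 : i + 1 < m),
      ∀ u ∈ G ⟨i, h1⟩, ∀ v ∈ G ⟨i + 1, h2⟩, σ u + dur u ≤ σ v) :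
    ∑ i, max (CPLen r dur (↑(G i))) (TWork dur dem C (G i)) ≤
      Finset.univ.sup' Finset.univ_nonempty (fun v => σ v + dur v) := by
  classical
  set M := Finset.univ.sup' Finset.univ_nonempty (fun v => σ v + dur v) with hM
  -- m > 0
  have hm : 0 < m := by
    obtain ⟨i, _⟩ := hcover (Classical.arbitrary V)
    exact i.pos
  -- group start / end
  set A : ℕ → ℝ := fun i => if h : i < m then (G ⟨i, h⟩).inf' (hne _) σ else 0 with hA
  set B : ℕ → ℝ := fun i => if h : i < m then (G ⟨i, h⟩).sup' (hne _) (fun v => σ v + dur v) else 0 with hB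
  have hA_le : ∀ (i : ℕ) (h : i < m), ∀ v ∈ G ⟨i, h⟩, A i ≤ σ v := by
    intro i h v hv; simp only [hA, dif_pos h]; exact Finset.inf'_le _ hv
  have hB_ge : ∀ (i : ℕ) (h : i < m), ∀ v ∈ G ⟨i, h⟩, σ v + dur v ≤ B i := by
    intro i h v hv; simp only [hB, dif_pos h]
    exact Finset.le_sup' (fun v => σ v + dur v) hv
  have hA_nonneg : ∀ (i : ℕ), i < m → 0 ≤ A i := by
    intro i h
    simp only [hA, dif_pos h]
    exact Finset.le_inf' _ _ (fun w _ => hσ w)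
  have hAB : ∀ (i : ℕ), i < m → A i ≤ B i := by
    intro i h
    obtain ⟨v, hv⟩ := hne ⟨i, h⟩
    have := hA_le i h v hv
    have := hB_ge i h v hv
    have := hdur v
    linarith
  have hBA : ∀ (i : ℕ), i + 1 < m → B i ≤ A (i + 1) := by
    intro i h
    have h1 : i < m := Nat.lt_of_succ_lt h
    simp only [hA, hB, dif_pos h1, dif_pos h]
    apply Finset.sup'_le
    intro u hu
    apply Finset.le_inf'
    intro v hv
    exact horder i h1 h u hu v hv
  have hBM : ∀ (i : ℕ), i < m → B i ≤ M := by
    intro i h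
    simp only [hB, dif_pos h]
    apply Finset.sup'_le
    intro v _
    exact Finset.le_sup' (fun v => σ v + dur v) (Finset.mem_univ v)
  -- the per-group bound
  have hgroup : ∀ (i : ℕ) (h : i < m),
      max (CPLen r dur (↑(G ⟨i, h⟩))) (TWork dur dem C (G ⟨i, h⟩)) ≤ B i - A i := by
    intro i h
    have hab : A i ≤ B i := hAB i h
    apply max_le
    · -- CPLen
      apply Real.sSup_le
      · rintro x ⟨l, hch, hmeml, rfl⟩
        cases l with
        | nil => simpa using sub_nonneg.mpr hab
        | cons v rest =>
          have hb : ∀ w ∈ (v :: rest), σ w + dur w ≤ B i := fun w hw =>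
            hB_ge i h w (by exact_mod_cast hmeml w hw)
          have := chain_bound r dur σ (B i) hprec (v :: rest) hch hb v rfl
          have hav : A i ≤ σ v := hA_le i h v (by exact_mod_cast hmeml v (by simp))
          linarith
      · linarith
    · -- TWork
      rw [TWork, div_le_iff₀ hC]
      have := area_bound dur dem C σ hdur hdem hC (A i) (B i) hab (G ⟨i, h⟩)
        (fun v hv => ⟨hA_le i h v hv, hB_ge i h v hv⟩)
        (fun t => le_trans (Finset.sum_le_sum_of_subset_of_nonneg
          (Finset.filter_subset_filter _ (Finset.subset_univ _))
          (fun v _ _ => hdem v)) (hcap t))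
      linarith [mul_comm C (B i - A i)]
  -- telescoping
  have htel : ∀ k : ℕ, 0 < k → k ≤ m → ∑ i ∈ Finset.range k, (B i - A i) ≤ B (k - 1) := by
    intro k
    induction k with
    | zero => intro h; exact absurd h (lt_irrefl 0)
    | succ n ih =>
      intro _ hkm
      rcases Nat.eq_zero_or_pos n with rfl | hn
      · rw [Finset.sum_range_one]
        have := hA_nonneg 0 (by omega)
        show B 0 - A 0 ≤ B 0
        linarith
      · rw [Finset.sum_range_succ]
        have h1 := ih hn (by omega)
        have h2 : B (n - 1) ≤ A n := by
          have := hBA (n - 1) (by omega)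
          rwa [Nat.sub_add_cancel hn] at this
        simp only [Nat.add_sub_cancel]
        linarith
  -- combine
  have hsum : ∑ i : Fin m, max (CPLen r dur (↑(G i))) (TWork dur dem C (G i))
      ≤ ∑ i ∈ Finset.range m, (B i - A i) := by
    rw [← Fin.sum_univ_eq_sum_range (fun i => B i - A i) m]
    apply Finset.sum_le_sum
    intro i _
    have h := hgroup i.val i.isLt
    rwa [Fin.eta] at h
  calc ∑ i : Fin m, max (CPLen r dur (↑(G i))) (TWork dur dem C (G i))
      ≤ ∑ i ∈ Finset.range m, (B i - A i) := hsum
    _ ≤ B (m - 1) := htel m hm le_rfl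
    _ ≤ M := hBM (m - 1) (by omega)
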